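/- arXiv:math/9911268 — 2 statements merged into one kernel-verified Lean document; each statement's English description precedes it below -/
import Mathlib

section
/- Every 1-extendable connected bipartite graph with more than two vertices is 2-connected. -/
open SimpleGraph

universe u v

variable {V : Type u} {W : Type v}

/-- `(A, B)` is a bipartition of the simple graph `G`. -/
def IsBipartition (G : SimpleGraph V) (A B : Set V) : Prop :=
  Disjoint A B ∧ A ∪ B = Set.univ ∧
    ∀ ⦃u v⦄, G.Adj u v → ((u ∈ A ∧ v ∈ B) ∨ (u ∈ B ∧ v ∈ A))

/-- `G` is `k`-extendable: every matching with at most `k` edges extends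
to a perfect matching. -/
def KExtendable (G : SimpleGraph V) (k : ℕ) : Prop :=
  ∀ M : G.Subgraph, M.IsMatching → M.edgeSet.ncard ≤ k →
    ∃ P : G.Subgraph, M ≤ P ∧ P.IsPerfectMatching

/-- A brace is a `2`-extendable bipartite graph. -/
def IsBrace (G : SimpleGraph V) : Prop :=
  (∃ A B, IsBipartition G A B) ∧ KExtendable G 2

/-- `G` has a matching whose vertex set is exactly `S`
(i.e. the subgraph of `G` induced on `S` has a perfect matching). -/
def HasPMOn (G : SimpleGraph V) (S : Set V) : Prop :=
  ∃ M : G.Subgraph, M.IsMatching ∧ M.verts = S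

/-- An orientation of a simple graph: each edge gets exactly one direction. -/
structure GraphOrientation (G : SimpleGraph V) where
  dir : V → V → Prop
  asymm : ∀ u v, dir u v → ¬ dir v u
  adj_iff : ∀ u v, G.Adj u v ↔ (dir u v ∨ dir v u)

open scoped Classical in
/-- The number of edges of the walk `w` traversed in agreement with the
orientation `o`. -/
noncomputable def forwardCount {G : SimpleGraph V} (o : GraphOrientation G) {u v : V}
    (w : G.Walk u v) : ℕ :=
  w.darts.countP fun d => decide (o.dir d.fst d.snd)

/-- `o` is a Pfaffian orientation of `G`: every central even circuit is oddly
oriented.  (For an even circuit, being oddly oriented with respect to one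
traversal direction is equivalent to being oddly oriented with respect to the
other.) -/
def IsPfaffian (G : SimpleGraph V) (o : GraphOrientation G) : Prop :=
  ∀ (v : V) (c : G.Walk v v), c.IsCycle → Even c.length →
    HasPMOn G {x | x ∉ c.support} → Odd (forwardCount o c)

/-- The neighborhood of a vertex set: vertices outside `X` adjacent to `X`. -/
def nbdSet (G : SimpleGraph V) (X : Set V) : Set V :=
  {v | v ∉ X ∧ ∃ x ∈ X, G.Adj x v}

/-- Restriction of `G` to the vertex set `T`, kept on the same vertex type. -/
def restrictG (G : SimpleGraph V) (T : Set V) : SimpleGraph V where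
  Adj x y := G.Adj x y ∧ x ∈ T ∧ y ∈ T
  symm := ⟨fun x y ⟨h, hx, hy⟩ => ⟨h.symm, hy, hx⟩⟩
  loopless := ⟨fun x ⟨h, _, _⟩ => G.irrefl h⟩

/-- Every edge of `G` is contained in a matching with vertex set exactly `S`.
(When the edges of `G` lie within `S`, this says that the graph on `S` is
1-extendable.) -/
def OneExtendableOn (G : SimpleGraph V) (S : Set V) : Prop :=
  ∀ ⦃x y⦄, G.Adj x y → ∃ M : G.Subgraph, M.IsMatching ∧ M.verts = S ∧ M.Adj x y

/-- `G` is 1-extendable: every edge lies in a perfect matching. -/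
def OneExtendable (G : SimpleGraph V) : Prop :=
  OneExtendableOn G Set.univ

/-- `G` is `k`-connected: more than `k` vertices, and deleting fewer than
`k` vertices leaves a connected graph. -/
def KConnected (G : SimpleGraph V) [Fintype V] (k : ℕ) : Prop :=
  k < Fintype.card V ∧ ∀ S : Set V, S.ncard < k → (G.induce (Sᶜ : Set V)).Connected

/-- A walk is `M`-alternating if its edges alternately belong and do not
belong to `M`. -/
def IsAltWalk {G : SimpleGraph V} (M : G.Subgraph) {u v : V} (w : G.Walk u v) : Prop :=
  (∀ (i : ℕ) (h : i < w.edges.length), (w.edges.get ⟨i, h⟩ ∈ M.edgeSet ↔ Even i)) ∨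
  (∀ (i : ℕ) (h : i < w.edges.length), (w.edges.get ⟨i, h⟩ ∈ M.edgeSet ↔ Odd i))

/-- A path is `M`-alternating if every internal vertex (vertex of degree two
in the path) is incident with an edge of `M` lying on the path. -/
def IsMAltPath {G : SimpleGraph V} (M : G.Subgraph) {a b : V} (p : G.Walk a b) : Prop :=
  p.IsPath ∧ ∀ x ∈ p.support, x ≠ a → x ≠ b → ∃ y, M.Adj x y ∧ s(x, y) ∈ p.edges

/-- An `H`-path: a path with at least one edge, both ends in `H`, and
otherwise disjoint from `H`. -/
def IsHPath {G : SimpleGraph V} (H : G.Subgraph) {a b : V} (p : G.Walk a b) : Prop :=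
  0 < p.length ∧ a ∈ H.verts ∧ b ∈ H.verts ∧
  (∀ x ∈ p.support, x ≠ a → x ≠ b → x ∉ H.verts) ∧
  ∀ e ∈ p.edges, e ∉ H.edgeSet

/-- Neighborhood of a vertex set inside a subgraph `H`. -/
def nbdSetSub {G : SimpleGraph V} (H : G.Subgraph) (X : Set V) : Set V :=
  {v | v ∉ X ∧ ∃ x ∈ X, H.Adj x v}

/-- `M` is a perfect matching of the subgraph `H`. -/
def SubgraphPM {G₀ : SimpleGraph V} (H M : G₀.Subgraph) : Prop :=
  M ≤ H ∧ M.IsMatching ∧ M.verts = H.verts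

/-- `G` is a 4-sum of the subgraphs `G₁, G₂` of `G₀` along the central
circuit `C` with vertices `a, b, c, d` (in order):
`G₁ ∪ G₂ = G₀`, `G₁ ∩ G₂ = C`, each `Gᵢ` has a vertex not in the other, and
`G` is obtained from `G₀` by deleting some (possibly no) edges of `C`. -/
def IsFourSum (G G₀ : SimpleGraph V) (G₁ G₂ : G₀.Subgraph) (a b c d : V) : Prop :=
  ([a, b, c, d] : List V).Nodup ∧
  G₀.Adj a b ∧ G₀.Adj b c ∧ G₀.Adj c d ∧ G₀.Adj d a ∧
  HasPMOn G₀ (({a, b, c, d} : Set V)ᶜ) ∧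
  G₁ ⊔ G₂ = (⊤ : G₀.Subgraph) ∧
  (G₁ ⊓ G₂).verts = ({a, b, c, d} : Set V) ∧
  (∀ x y, (G₁ ⊓ G₂).Adj x y ↔
      s(x, y) ∈ ({s(a, b), s(b, c), s(c, d), s(d, a)} : Set (Sym2 V))) ∧
  (G₁.verts \ G₂.verts).Nonempty ∧ (G₂.verts \ G₁.verts).Nonempty ∧
  (∀ x y, G.Adj x y → G₀.Adj x y) ∧
  (∀ x y, G₀.Adj x y →
      G.Adj x y ∨ s(x, y) ∈ ({s(a, b), s(b, c), s(c, d), s(d, a)} : Set (Sym2 V)))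

/-- `G` contains `H`: some even subdivision of `H` (each edge replaced by an
internally disjoint path with an odd number of edges) is isomorphic to a
central subgraph of `G`. -/
def Contains (G : SimpleGraph V) (H : SimpleGraph W) : Prop :=
  ∃ (f : W → V) (p : ∀ u v : W, H.Adj u v → G.Walk (f u) (f v)),
    Function.Injective f ∧
    (∀ u v (h : H.Adj u v), (p u v h).IsPath ∧ Odd (p u v h).length) ∧
    (∀ u v (h : H.Adj u v), p v u h.symm = (p u v h).reverse) ∧
    (∀ u v (h : H.Adj u v) (w : W), f w ∈ (p u v h).support → w = u ∨ w = v) ∧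
    (∀ u v u' v' (h : H.Adj u v) (h' : H.Adj u' v'), s(u, v) ≠ s(u', v') →
      ∀ x, x ∈ (p u v h).support → x ∈ (p u' v' h').support →
        (x = f u ∨ x = f v) ∧ (x = f u' ∨ x = f v')) ∧
    HasPMOn G ((Set.range f ∪ {x | ∃ u v, ∃ h : H.Adj u v, x ∈ (p u v h).support})ᶜ)

/-- `K'` is obtained from `K` by a bicontraction: contracting both edges at a
vertex `u` of degree two (with distinct neighbors `a` and `b`) and deleting
parallel edges. -/
def BicontractAt (K K' : (⊤ : SimpleGraph V).Subgraph) : Prop :=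
  ∃ u a b : V, a ≠ b ∧ K.Adj u a ∧ K.Adj u b ∧
    (∀ x, K.Adj u x → x = a ∨ x = b) ∧
    K'.verts = K.verts \ {u, a} ∧
    ∀ x y, K'.Adj x y ↔ (x ∈ K.verts \ {u, a} ∧ y ∈ K.verts \ {u, a} ∧ x ≠ y ∧
      ∃ x' y', K.Adj x' y' ∧ (x' = x ∨ (x = b ∧ (x' = a ∨ x' = u))) ∧
        (y' = y ∨ (y = b ∧ (y' = a ∨ y' = u))))

/-- `G` weakly contains `H`: `G` has a central subgraph `K` from which a graph
isomorphic to `H` can be obtained by a sequence of bicontractions. -/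
def WeaklyContains (G : SimpleGraph V) (H : SimpleGraph W) : Prop :=
  ∃ K : (⊤ : SimpleGraph V).Subgraph,
    (∀ ⦃x y⦄, K.Adj x y → G.Adj x y) ∧
    HasPMOn G (K.vertsᶜ) ∧
    ∃ K' : (⊤ : SimpleGraph V).Subgraph,
      Relation.ReflTransGen BicontractAt K K' ∧ Nonempty (K'.coe ≃g H)

/-- The Heawood graph (LCF notation `[5, -5]⁷`): a 14-cycle together with the
chords `{i, i+5}` for even `i`. -/
def heawood : SimpleGraph (Fin 14) :=
  SimpleGraph.fromRel (fun i j => j = i + 1 ∨ (Even (i : ℕ) ∧ j = i + 5))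

/-- The digraph `D(G, M)` on the color class `A`, obtained from `G` by
directing every edge from `A` to `B` and contracting every edge of `M`. -/
def DGM (G : SimpleGraph V) (A : Set V) (M : G.Subgraph) : A → A → Prop :=
  fun a a' => ∃ b, M.Adj (↑a' : V) b ∧ G.Adj (↑a : V) b

/-- A digraph is strongly `k`-connected if deleting fewer than `k` vertices
leaves it strongly connected. -/
def StronglyKConnected {α : Type*} (D : α → α → Prop) (k : ℕ) : Prop :=
  ∀ S : Set α, S.ncard < k → ∀ u v : α, u ∉ S → v ∉ S →
    Relation.ReflTransGen (fun x y => D x y ∧ x ∉ S ∧ y ∉ S) u v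

/-- The edge `u₁u₂` of the graph with vertex set `S` obtained from `G₁` is
reducing: deleting both ends destroys 1-extendability. -/
def ReducingIn (G₁ : SimpleGraph V) (S : Set V) (u₁ u₂ : V) : Prop :=
  G₁.Adj u₁ u₂ ∧
    ¬ OneExtendableOn (restrictG G₁ (({u₁, u₂} : Set V)ᶜ)) (S \ {u₁, u₂})

/-- `G` (bipartite with bipartition `(A, B)`) is a 2-sum of `G₁` (with vertex
set `V₁`) and `G₂` (with vertex set `V₂`) along the edge `u₁u₂`. -/
def IsTwoSum (G : SimpleGraph V) (A B : Set V) (u₁ u₂ : V)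
    (G₁ G₂ : SimpleGraph V) (V₁ V₂ : Set V) : Prop :=
  u₁ ∈ A ∧ u₂ ∈ B ∧ G.Adj u₁ u₂ ∧
  ∃ X : Set V, X.Nonempty ∧ X ⊆ A \ {u₁} ∧ X ≠ A \ {u₁} ∧
    (nbdSet G X \ {u₂}).ncard = X.ncard ∧
    V₂ = ((X ∪ (nbdSet G X \ {u₂}))ᶜ : Set V) ∧
    V₁ = X ∪ (nbdSet G X \ {u₂}) ∪ {u₁, u₂} ∧
    (∀ x y, G₁.Adj x y ↔ ((G.Adj x y ∧ x ∈ V₁ ∧ y ∈ V₁) ∨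
      (x = u₁ ∧ y ∈ {w | w ∈ nbdSet G X \ {u₂} ∧ ¬ G.Adj u₁ w ∧ ∃ z, z ∉ V₁ ∧ G.Adj w z}) ∨
      (y = u₁ ∧ x ∈ {w | w ∈ nbdSet G X \ {u₂} ∧ ¬ G.Adj u₁ w ∧ ∃ z, z ∉ V₁ ∧ G.Adj w z}))) ∧
    (∀ x y, G₂.Adj x y ↔ ((G.Adj x y ∧ x ∈ V₂ ∧ y ∈ V₂) ∨
      (x = u₂ ∧ y ∈ {w | w ∈ (A \ X) \ {u₁} ∧ ¬ G.Adj u₂ w ∧ ∃ z, z ∉ V₂ ∧ G.Adj w z}) ∨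
      (y = u₂ ∧ x ∈ {w | w ∈ (A \ X) \ {u₁} ∧ ¬ G.Adj u₂ w ∧ ∃ z, z ∉ V₂ ∧ G.Adj w z})))

/-- A trisector: a set of four vertices whose deletion leaves at least three
connected components. -/
def IsTrisector (G : SimpleGraph V) (X : Set V) : Prop :=
  X.ncard = 4 ∧ 3 ≤ Nat.card (G.induce (Xᶜ : Set V)).ConnectedComponent

/-- Key parity lemma: neighbors of `v` are connected in `G - v`. -/
lemma key_reach [Fintype V] {G : SimpleGraph V} {v : V}
    (h1 : ∀ ⦃x y⦄, G.Adj x y → ∃ M : G.Subgraph, M.IsMatching ∧ M.verts = Set.univ ∧ M.Adj x y)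
    {a b : V} (hva : G.Adj v a) (hvb : G.Adj v b)
    (ha : a ∈ ({v}ᶜ : Set V)) (hb : b ∈ ({v}ᶜ : Set V)) :
    (G.induce ({v}ᶜ : Set V)).Reachable ⟨a, ha⟩ ⟨b, hb⟩ := by
  classical
  by_contra hcon
  set G' := G.induce ({v}ᶜ : Set V) with hG'
  set s : Set V := {x | ∃ hx : x ∈ ({v}ᶜ : Set V), G'.Reachable ⟨x, hx⟩ ⟨a, ha⟩} with hs
  have hclos : ∀ x ∈ s, ∀ y, G.Adj x y → y ≠ v → y ∈ s := by
    rintro x ⟨hx, hr⟩ y hadj hy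
    have hy' : y ∈ ({v}ᶜ : Set V) := hy
    have hadj' : G'.Adj ⟨y, hy'⟩ ⟨x, hx⟩ := hadj.symm
    exact ⟨hy', hadj'.reachable.trans hr⟩
  have haS : a ∈ s := ⟨ha, Reachable.refl _⟩
  have hbS : b ∉ s := by
    rintro ⟨hb', hr⟩
    exact hcon hr.symm
  have hvS : v ∉ s := by
    rintro ⟨hv', -⟩
    exact hv' rfl
  obtain ⟨M, hM, hMverts, hMa⟩ := h1 hva
  obtain ⟨M', hM', hM'verts, hM'b⟩ := h1 hvb
  -- Claim A : M.induce (insert v s) is a matching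
  have hA : (M.induce (insert v s)).IsMatching := by
    intro x hx
    have hxv : x ∈ M.verts := by rw [hMverts]; trivial
    obtain ⟨w, hw, hwu⟩ := hM hxv
    refine ⟨w, ⟨hx, ?_, hw⟩, ?_⟩
    · rcases hx with rfl | hxs
      · have hvmem : x ∈ M.verts := by rw [hMverts]; trivial
        have : w = a := (hM hvmem).unique hw hMa
        exact this ▸ Set.mem_insert_of_mem _ haS
      · by_cases hwv : w = v
        · exact hwv ▸ Set.mem_insert _ _
        · exact Set.mem_insert_of_mem _ (hclos x hxs w (M.adj_sub hw) hwv)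
    · rintro y ⟨-, -, hy⟩
      exact hwu y hy
  -- Claim B : M'.induce s is a matching
  have hB : (M'.induce s).IsMatching := by
    intro x hx
    have hxv : x ∈ M'.verts := by rw [hM'verts]; trivial
    obtain ⟨w, hw, hwu⟩ := hM' hxv
    refine ⟨w, ⟨hx, ?_, hw⟩, ?_⟩
    · by_cases hwv : w = v
      · exfalso
        have hvmem : v ∈ M'.verts := by rw [hM'verts]; trivial
        have hvx : M'.Adj v x := hwv ▸ hw.symm
        have : x = b := (hM' hvmem).unique hvx hM'b
        exact hbS (this ▸ hx)
      · exact hclos x hx w (M'.adj_sub hw) hwv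
    · rintro y ⟨-, -, hy⟩
      exact hwu y hy
  -- parity
  haveI : Fintype ((M.induce (insert v s)).verts : Set V) := Set.Finite.fintype (Set.toFinite _)
  haveI : Fintype ((M'.induce s).verts : Set V) := Set.Finite.fintype (Set.toFinite _)
  have eA : Even (insert v s).ncard := by
    have h := hA.even_card
    rwa [Set.toFinset_card, ← Nat.card_eq_fintype_card, Nat.card_coe_set_eq] at h
  have eB : Even s.ncard := by
    have h := hB.even_card
    rwa [Set.toFinset_card, ← Nat.card_eq_fintype_card, Nat.card_coe_set_eq] at h
  rw [Set.ncard_insert_of_notMem hvS (Set.toFinite s), Nat.even_add_one] at eA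
  exact eA eB

lemma reach_aux {G : SimpleGraph V} {v : V}
    (hkey : ∀ a b (hva : G.Adj v a) (hvb : G.Adj v b),
      (G.induce ({v}ᶜ : Set V)).Reachable ⟨a, hva.ne'⟩ ⟨b, hvb.ne'⟩) :
    ∀ (n : ℕ) (a b : V) (ha : a ∈ ({v}ᶜ : Set V)) (hb : b ∈ ({v}ᶜ : Set V))
      (w : G.Walk a b), w.length ≤ n →
      (G.induce ({v}ᶜ : Set V)).Reachable ⟨a, ha⟩ ⟨b, hb⟩ := by
  intro n
  induction n with
  | zero =>
    intro a b ha hb w hw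
    cases w with
    | nil => rfl
    | cons h p => simp [Walk.length_cons] at hw
  | succ n ih =>
    intro a b ha hb w hw
    cases w with
    | nil => rfl
    | cons h p =>
      rename_i c
      by_cases hc : c = v
      · subst hc
        cases p with
        | nil => exact absurd rfl hb
        | cons h' p' =>
          rename_i c'
          have h1 := hkey a c' h.symm h'
          have h2 := ih c' b h'.ne' hb p' (by
            simp only [Walk.length_cons] at hw; omega)
          exact Reachable.trans h1 h2
      · have h1 : (G.induce ({v}ᶜ : Set V)).Adj ⟨a, ha⟩ ⟨c, hc⟩ := h
        have h2 := ih c b hc hb p (by simp only [Walk.length_cons] at hw; omega)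
        exact h1.reachable.trans h2

/-- Every 1-extendable connected bipartite graph with more than two vertices
is 2-connected. -/
theorem oneExtendable_twoConnected [Fintype V] (G : SimpleGraph V)
    (hbip : ∃ A B, IsBipartition G A B) (hconn : G.Connected)
    (h1 : OneExtendable G) (hcard : 2 < Fintype.card V) :
    KConnected G 2 := by
  classical
  refine ⟨hcard, fun S hS => ?_⟩
  interval_cases h : S.ncard
  · -- S = ∅
    have hSe : S = ∅ := (Set.ncard_eq_zero (Set.toFinite S)).mp h
    subst hSe
    rw [Set.compl_empty]
    exact (induceUnivIso G).connected_iff.mpr hconn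
  · -- S = {v}
    obtain ⟨v, rfl⟩ := Set.ncard_eq_one.mp h
    have h1' : ∀ ⦃x y⦄, G.Adj x y →
        ∃ M : G.Subgraph, M.IsMatching ∧ M.verts = Set.univ ∧ M.Adj x y := fun x y hxy => h1 hxy
    have hkey : ∀ a b (hva : G.Adj v a) (hvb : G.Adj v b),
        (G.induce ({v}ᶜ : Set V)).Reachable ⟨a, hva.ne'⟩ ⟨b, hvb.ne'⟩ :=
      fun a b hva hvb => key_reach h1' hva hvb hva.ne' hvb.ne'
    have hne : Nonempty ({v}ᶜ : Set V) := by
      haveI : Nontrivial V := Fintype.one_lt_card_iff_nontrivial.mp (by omega)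
      obtain ⟨u, hu⟩ := exists_ne v
      exact ⟨⟨u, hu⟩⟩
    haveI := hne
    refine ⟨fun x y => ?_⟩
    obtain ⟨a, ha⟩ := x
    obtain ⟨b, hb⟩ := y
    obtain ⟨w⟩ := hconn.preconnected a b
    exact reach_aux hkey w.length a b ha hb w le_rfl
end

section
/- The complete bipartite graph K_{3,3} does not admit a Pfaffian orientation. -/
open SimpleGraph

universe u v

variable {V : Type u} {W : Type v}

abbrev G33 := completeBipartiteGraph (Fin 3) (Fin 3)

lemma adjlr (i j : Fin 3) : G33.Adj (Sum.inl i) (Sum.inr j) := by simp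
lemma adjrl (j i : Fin 3) : G33.Adj (Sum.inr j) (Sum.inl i) := by simp

lemma third {i i' i'' a : Fin 3} (hi : ∀ x : Fin 3, x = i ∨ x = i' ∨ x = i'')
    (h1 : i'' ≠ i) (h2 : i'' ≠ i') : (¬(a = i ∨ a = i')) ↔ a = i'' := by
  rcases hi a with h | h | h <;> subst h <;> tauto

lemma cycle4 {V : Type} [DecidableEq V] {G : SimpleGraph V} {a b c d : V}
    (h1 : G.Adj a b) (h2 : G.Adj b c) (h3 : G.Adj c d) (h4 : G.Adj d a)
    (hac : a ≠ c) (hbd : b ≠ d) :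
    (Walk.cons h1 (Walk.cons h2 (Walk.cons h3 (Walk.cons h4 Walk.nil)))).IsCycle := by
  have hab := h1.ne; have hbc := h2.ne; have hcd := h3.ne; have hda := h4.ne
  constructor
  · constructor
    · rw [Walk.isTrail_def]
      simp [Sym2.eq_iff]
      aesop
    · simp
  · simp
    aesop

open scoped Classical in
lemma flip_dir (o : GraphOrientation G33) (i j : Fin 3) :
    (if o.dir (Sum.inr j) (Sum.inl i) then (1:ℕ) else 0) +
    (if o.dir (Sum.inl i) (Sum.inr j) then (1:ℕ) else 0) = 1 := by
  have h := (o.adj_iff _ _).mp (adjlr i j)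
  have h2 := o.asymm (Sum.inl i) (Sum.inr j)
  have h3 := o.asymm (Sum.inr j) (Sum.inl i)
  rcases h with h | h
  · rw [if_neg (h2 h), if_pos h]
  · rw [if_pos h, if_neg (h3 h)]

open scoped Classical in
lemma key (o : GraphOrientation G33) (hpf : IsPfaffian G33 o)
    (i i' i'' j j' j'' : Fin 3)
    (hi : ∀ x : Fin 3, x = i ∨ x = i' ∨ x = i'') (hii : i ≠ i')
    (hi1 : i'' ≠ i) (hi2 : i'' ≠ i')
    (hj : ∀ x : Fin 3, x = j ∨ x = j' ∨ x = j'') (hjj : j ≠ j')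
    (hj1 : j'' ≠ j) (hj2 : j'' ≠ j') :
    ((if o.dir (Sum.inl i) (Sum.inr j) then 1 else 0) +
     (if o.dir (Sum.inl i') (Sum.inr j) then 1 else 0) +
     (if o.dir (Sum.inl i') (Sum.inr j') then 1 else 0) +
     (if o.dir (Sum.inl i) (Sum.inr j') then 1 else 0)) % 2 = 1 := by
  set w : G33.Walk (Sum.inl i) (Sum.inl i) :=
    Walk.cons (adjlr i j) (Walk.cons (adjrl j i') (Walk.cons (adjlr i' j')
      (Walk.cons (adjrl j' i) Walk.nil))) with hw
  have hcyc : w.IsCycle := by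
    apply cycle4
    · simp [hii]
    · simp [hjj]
  have heven : Even w.length := by simp [hw]; decide
  have hpm : HasPMOn G33 {x | x ∉ w.support} := by
    refine ⟨G33.subgraphOfAdj (adjlr i'' j''), Subgraph.IsMatching.subgraphOfAdj _, ?_⟩
    ext x
    rcases x with a | a
    · have h3 := third (a := a) hi hi1 hi2
      simp [hw]
      tauto
    · have h3 := third (a := a) hj hj1 hj2
      simp [hw]
      tauto
  have hodd := hpf _ w hcyc heven hpm
  have hfc : forwardCount o w =
      (if o.dir (Sum.inr j') (Sum.inl i) then 1 else 0) +
      (if o.dir (Sum.inl i') (Sum.inr j') then 1 else 0) +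
      (if o.dir (Sum.inr j) (Sum.inl i') then 1 else 0) +
      (if o.dir (Sum.inl i) (Sum.inr j) then 1 else 0) := by
    simp [hw, forwardCount, List.countP_cons]
    try ring
  rw [hfc] at hodd
  rw [Nat.odd_iff] at hodd
  have f1 := flip_dir o i j'
  have f2 := flip_dir o i' j
  omega

open scoped Classical in
lemma K33_final (o : GraphOrientation G33) (hpf : IsPfaffian G33 o) : False := by
  have hb00 : (if o.dir (Sum.inl (0:Fin 3)) (Sum.inr (0:Fin 3)) then (1:ℕ) else 0) ≤ 1 := by split <;> omega
  have hb01 : (if o.dir (Sum.inl (0:Fin 3)) (Sum.inr (1:Fin 3)) then (1:ℕ) else 0) ≤ 1 := by split <;> omega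
  have hb02 : (if o.dir (Sum.inl (0:Fin 3)) (Sum.inr (2:Fin 3)) then (1:ℕ) else 0) ≤ 1 := by split <;> omega
  have hb10 : (if o.dir (Sum.inl (1:Fin 3)) (Sum.inr (0:Fin 3)) then (1:ℕ) else 0) ≤ 1 := by split <;> omega
  have hb11 : (if o.dir (Sum.inl (1:Fin 3)) (Sum.inr (1:Fin 3)) then (1:ℕ) else 0) ≤ 1 := by split <;> omega
  have hb12 : (if o.dir (Sum.inl (1:Fin 3)) (Sum.inr (2:Fin 3)) then (1:ℕ) else 0) ≤ 1 := by split <;> omega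
  have hb20 : (if o.dir (Sum.inl (2:Fin 3)) (Sum.inr (0:Fin 3)) then (1:ℕ) else 0) ≤ 1 := by split <;> omega
  have hb21 : (if o.dir (Sum.inl (2:Fin 3)) (Sum.inr (1:Fin 3)) then (1:ℕ) else 0) ≤ 1 := by split <;> omega
  have hb22 : (if o.dir (Sum.inl (2:Fin 3)) (Sum.inr (2:Fin 3)) then (1:ℕ) else 0) ≤ 1 := by split <;> omega
  have k0101 := key o hpf 0 1 2 0 1 2 (by decide) (by decide) (by decide) (by decide) (by decide) (by decide) (by decide) (by decide)
  have k0102 := key o hpf 0 1 2 0 2 1 (by decide) (by decide) (by decide) (by decide) (by decide) (by decide) (by decide) (by decide)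
  have k0112 := key o hpf 0 1 2 1 2 0 (by decide) (by decide) (by decide) (by decide) (by decide) (by decide) (by decide) (by decide)
  have k0201 := key o hpf 0 2 1 0 1 2 (by decide) (by decide) (by decide) (by decide) (by decide) (by decide) (by decide) (by decide)
  have k0202 := key o hpf 0 2 1 0 2 1 (by decide) (by decide) (by decide) (by decide) (by decide) (by decide) (by decide) (by decide)
  have k0212 := key o hpf 0 2 1 1 2 0 (by decide) (by decide) (by decide) (by decide) (by decide) (by decide) (by decide) (by decide)
  have k1201 := key o hpf 1 2 0 0 1 2 (by decide) (by decide) (by decide) (by decide) (by decide) (by decide) (by decide) (by decide)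
  have k1202 := key o hpf 1 2 0 0 2 1 (by decide) (by decide) (by decide) (by decide) (by decide) (by decide) (by decide) (by decide)
  have k1212 := key o hpf 1 2 0 1 2 0 (by decide) (by decide) (by decide) (by decide) (by decide) (by decide) (by decide) (by decide)
  set n00 := (if o.dir (Sum.inl (0:Fin 3)) (Sum.inr (0:Fin 3)) then (1:ℕ) else 0) with hn00
  set n01 := (if o.dir (Sum.inl (0:Fin 3)) (Sum.inr (1:Fin 3)) then (1:ℕ) else 0) with hn01
  set n02 := (if o.dir (Sum.inl (0:Fin 3)) (Sum.inr (2:Fin 3)) then (1:ℕ) else 0) with hn02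
  set n10 := (if o.dir (Sum.inl (1:Fin 3)) (Sum.inr (0:Fin 3)) then (1:ℕ) else 0) with hn10
  set n11 := (if o.dir (Sum.inl (1:Fin 3)) (Sum.inr (1:Fin 3)) then (1:ℕ) else 0) with hn11
  set n12 := (if o.dir (Sum.inl (1:Fin 3)) (Sum.inr (2:Fin 3)) then (1:ℕ) else 0) with hn12
  set n20 := (if o.dir (Sum.inl (2:Fin 3)) (Sum.inr (0:Fin 3)) then (1:ℕ) else 0) with hn20
  set n21 := (if o.dir (Sum.inl (2:Fin 3)) (Sum.inr (1:Fin 3)) then (1:ℕ) else 0) with hn21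
  set n22 := (if o.dir (Sum.inl (2:Fin 3)) (Sum.inr (2:Fin 3)) then (1:ℕ) else 0) with hn22
  omega

/-- `K₃,₃` does not admit a Pfaffian orientation. -/
theorem K33_not_pfaffian :
    ¬ ∃ o : GraphOrientation (completeBipartiteGraph (Fin 3) (Fin 3)),
        IsPfaffian (completeBipartiteGraph (Fin 3) (Fin 3)) o := by
  rintro ⟨o, hpf⟩
  exact K33_final o hpf
end
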